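/- Let q = q_0^s for a prime power q_0 and integer s ≥ 1, and fix a sum-rank length partition N = Σ r_i. For any code C ⊆ F_{q^m}^N, the subextension subcode C ∩ F_{q_0^m}^N has minimum sum-rank distance over F_{q_0} at least the minimum sum-rank distance of C over F_q (assuming the subextension subcode has at least two elements). -/

import Mathlib

/-- Sum-rank weight of a block vector over `Fq`: sum over the blocks of the
`Fq`-rank of the block (i.e. the `Fq`-dimension of the span of its entries). -/
noncomputable def srWeight (Fq : Type*) [Field Fq] {F : Type*} [Field F] [Algebra Fq F]
    {g : ℕ} {r : Fin g → ℕ} (c : ∀ i : Fin g, Fin (r i) → F) : ℕ :=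
  ∑ i, Module.finrank Fq (Submodule.span Fq (Set.range (c i)))

/-- Minimum sum-rank distance of a (possibly nonlinear) code. -/
noncomputable def srMinDist (Fq : Type*) [Field Fq] {F : Type*} [Field F] [Algebra Fq F]
    {g : ℕ} {r : Fin g → ℕ} (C : Set (∀ i : Fin g, Fin (r i) → F)) : ℕ :=
  sInf {w | ∃ c ∈ C, ∃ d ∈ C, c ≠ d ∧ w = srWeight Fq (c - d)}

/-- Hamming weight of a block vector. -/
noncomputable def hamWeight {F : Type*} [Field F] [DecidableEq F]
    {g : ℕ} {r : Fin g → ℕ} (c : ∀ i : Fin g, Fin (r i) → F) : ℕ :=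
  ∑ i, (Finset.univ.filter fun j => c i j ≠ 0).card

/-- Minimum Hamming distance of a (possibly nonlinear) code. -/
noncomputable def hamMinDist {F : Type*} [Field F] [DecidableEq F]
    {g : ℕ} {r : Fin g → ℕ} (C : Set (∀ i : Fin g, Fin (r i) → F)) : ℕ :=
  sInf {w | ∃ c ∈ C, ∃ d ∈ C, c ≠ d ∧ w = hamWeight (c - d)}

/-- Blockwise multiplication of a block vector by a block-diagonal matrix
`diag(A_1, …, A_g)` with entries in the subfield `Fq`. -/
noncomputable def blockMul {Fq F : Type*} [Field Fq] [Field F] [Algebra Fq F]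
    {g : ℕ} {r n : Fin g → ℕ} (c : ∀ i : Fin g, Fin (r i) → F)
    (A : ∀ i : Fin g, Matrix (Fin (r i)) (Fin (n i)) Fq) :
    ∀ i : Fin g, Fin (n i) → F :=
  fun i j => ∑ t, c i t * algebraMap Fq F (A i t j)

/-- Over a tower `K0 ⊆ K ⊆ L` of finite fields, the `K`-rank of the span of a
finite family is at most its `K0`-rank. -/
lemma finrank_span_le_finrank_span_tower
    {K0 K L : Type*} [Field K0] [Finite K0] [Field K] [Finite K] [Field L] [Finite L]
    [Algebra K0 K] [Algebra K L] [Algebra K0 L] [IsScalarTower K0 K L]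
    {ι : Type*} [Fintype ι] (f : ι → L) :
    Module.finrank K (Submodule.span K (Set.range f)) ≤
      Module.finrank K0 (Submodule.span K0 (Set.range f)) := by
  have : Module.Finite K L := Module.Finite.of_finite
  have : Module.Finite K0 L := Module.Finite.of_finite
  set V0 : Submodule K0 L := Submodule.span K0 (Set.range f) with hV0
  have : Module.Finite K0 V0 := Module.Finite.of_finite
  set n := Module.finrank K0 V0 with hn
  let b : Module.Basis (Fin n) K0 V0 := Module.finBasis K0 V0
  have hVspan : V0 = Submodule.span K0 (Set.range fun i => (b i : L)) := by
    have : Set.range (fun i => (b i : L)) = V0.subtype '' Set.range b := by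
      ext x; simp [Set.range_comp, Submodule.subtype]
    rw [this, ← Submodule.map_span, b.span_eq, Submodule.map_top,
      Submodule.range_subtype]
  have hsub : Set.range f ⊆ (Submodule.span K (Set.range fun i => (b i : L)) : Set L) := by
    intro x hx
    have hxV : x ∈ V0 := Submodule.subset_span hx
    rw [hVspan] at hxV
    exact Submodule.span_subset_span K0 K _ hxV
  calc Module.finrank K (Submodule.span K (Set.range f))
      ≤ Module.finrank K (Submodule.span K (Set.range fun i => (b i : L))) :=
        Submodule.finrank_mono (Submodule.span_le.mpr hsub)
    _ ≤ Fintype.card (Fin n) := finrank_range_le_card _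
    _ = n := Fintype.card_fin n

lemma srWeight_le_srWeight_tower
    {K0 K L : Type*} [Field K0] [Finite K0] [Field K] [Finite K] [Field L] [Finite L]
    [Algebra K0 K] [Algebra K L] [Algebra K0 L] [IsScalarTower K0 K L]
    {g : ℕ} {r : Fin g → ℕ} (c : ∀ i : Fin g, Fin (r i) → L) :
    srWeight K c ≤ srWeight K0 c :=
  Finset.sum_le_sum fun i _ => finrank_span_le_finrank_span_tower (c i)

/-- let `F_{q_0} ⊆ F_q ⊆ F_{q^m}` with `q = q_0^s`, and let
`F_{q_0^m} ⊆ F_{q^m}` be the subfield with `q_0^m` elements.  For any code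
`C ⊆ F_{q^m}^N`, the subextension subcode `C ∩ F_{q_0^m}^N` has minimum sum-rank
distance over `F_{q_0}` at least the minimum sum-rank distance of `C` over `F_q`. -/
theorem subextension_subcode_distance
    {K0 K L : Type*} [Field K0] [Fintype K0] [Field K] [Fintype K] [Field L] [Fintype L]
    [Algebra K0 K] [Algebra K L] [Algebra K0 L] [IsScalarTower K0 K L]
    {s m : ℕ} (hs : 1 ≤ s) (hq : Fintype.card K = Fintype.card K0 ^ s)
    (hm : Module.finrank K L = m)
    (L0 : Subfield L) (hL0 : ∀ x : L, x ∈ L0 ↔ x ^ (Fintype.card K0) ^ m = x)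
    {g : ℕ} {r : Fin g → ℕ} (C : Set (∀ i : Fin g, Fin (r i) → L))
    (hC0 : ({c ∈ C | ∀ i j, c i j ∈ L0} : Set (∀ i : Fin g, Fin (r i) → L)).Nontrivial) :
    srMinDist K C ≤ srMinDist K0 {c ∈ C | ∀ i j, c i j ∈ L0} := by
  obtain ⟨c, hc, d, hd, hne⟩ := hC0
  set C0 : Set (∀ i : Fin g, Fin (r i) → L) := {c ∈ C | ∀ i j, c i j ∈ L0}
  set T := {w | ∃ c ∈ C0, ∃ d ∈ C0, c ≠ d ∧ w = srWeight K0 (c - d)}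
  have hTne : T.Nonempty := ⟨srWeight K0 (c - d), c, hc, d, hd, hne, rfl⟩
  have hmem : sInf T ∈ T := Nat.sInf_mem hTne
  obtain ⟨c', hc', d', hd', hne', heq⟩ := hmem
  have h1 : srMinDist K C ≤ srWeight K (c' - d') :=
    Nat.sInf_le ⟨c', hc'.1, d', hd'.1, hne', rfl⟩
  calc srMinDist K C ≤ srWeight K (c' - d') := h1
    _ ≤ srWeight K0 (c' - d') := srWeight_le_srWeight_tower _
    _ = srMinDist K0 C0 := heq.symm
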